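/- arXiv:1208.1227 — 10 statements merged into one kernel-verified Lean document; each statement's English description precedes it below -/
import Mathlib

section
/- Let y, c be rational numbers satisfying y² = −7c⁴ + 40c³ − 84c² + 80c − 28, with c ≠ 1 and c ≠ 2. Then the rational number b = c(c² + y − 2) / (2(c − 1)(c − 2)((c − 1)² + 1)) satisfies b²c⁴ − 5b²c³ + 10b²c² − 10b²c + 4b² − bc³ + 2bc + 2c² = 0. -/
theorem stmt_0 (y c b : ℚ)
    (hy : y^2 = -7*c^4 + 40*c^3 - 84*c^2 + 80*c - 28)
    (hc1 : c ≠ 1) (hc2 : c ≠ 2)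
    (hb : b = c*(c^2 + y - 2) / (2*(c - 1)*(c - 2)*((c - 1)^2 + 1))) :
    b^2*c^4 - 5*b^2*c^3 + 10*b^2*c^2 - 10*b^2*c + 4*b^2 - b*c^3 + 2*b*c + 2*c^2 = 0 := by
  have h1 : c - 1 ≠ 0 := sub_ne_zero.mpr hc1
  have h2 : c - 2 ≠ 0 := sub_ne_zero.mpr hc2
  have h3 : (c - 1)^2 + 1 ≠ 0 := by positivity
  subst hb
  field_simp
  linear_combination (4*c^2 - 10*c^3 + 10*c^4 - 5*c^5 + c^6) * hy
end

section
/- Let b, c be rational numbers with c ≠ 0 satisfying b²c⁴ − 5b²c³ + 10b²c² − 10b²c + 4b² − bc³ + 2bc + 2c² = 0. Then the rational number y = ((2c⁴ − 10c³ + 20c² − 20c + 8)·b − c³ + 2c) / c satisfies y² = −7c⁴ + 40c³ − 84c² + 80c − 28. -/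
theorem stmt_2 (b c y : ℚ) (hc : c ≠ 0)
    (heq : b^2*c^4 - 5*b^2*c^3 + 10*b^2*c^2 - 10*b^2*c + 4*b^2 - b*c^3 + 2*b*c + 2*c^2 = 0)
    (hy : y = ((2*c^4 - 10*c^3 + 20*c^2 - 20*c + 8)*b - c^3 + 2*c) / c) :
    y^2 = -7*c^4 + 40*c^3 - 84*c^2 + 80*c - 28 := by
  subst hy
  field_simp
  ring_nf
  linear_combination (4*c^4 - 20*c^3 + 40*c^2 - 40*c + 16) * heq
end

section
/- Let b, c be rational numbers satisfying 2b²c⁴ − 12b²c³ + 26b²c² − 24b²c + 8b² − bc⁴ + 3bc³ − 6bc + 4b + c³ − 2c² + 2c = 0. Then the rational number y = (4c² − 12c + 8)·b − c² + 2 satisfies y² = c⁴ − 8c³ + 12c² − 16c + 4. -/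
theorem stmt_3 (b c y : ℚ)
    (heq : 2*b^2*c^4 - 12*b^2*c^3 + 26*b^2*c^2 - 24*b^2*c + 8*b^2 - b*c^4 + 3*b*c^3 - 6*b*c
      + 4*b + c^3 - 2*c^2 + 2*c = 0)
    (hy : y = (4*c^2 - 12*c + 8)*b - c^2 + 2) :
    y^2 = c^4 - 8*c^3 + 12*c^2 - 16*c + 4 := by
  subst hy
  linear_combination 8*heq
end

section
/- The map sending (b, c) to (y, c) with y = ((2c⁴ − 10c³ + 20c² − 20c + 8)·b − c³ + 2c)/c is a bijection from the set of rational pairs (b, c) satisfying b²c⁴ − 5b²c³ + 10b²c² − 10b²c + 4b² − bc³ + 2bc + 2c² = 0 other than (0,0), (−2,1), (2,2), onto the set of rational pairs (y, c) satisfying y² = −7c⁴ + 40c³ − 84c² + 80c − 28 other than (1,1), (−1,1), (−2,2), (2,2); its inverse sends (y, c) to (b, c) with b = c(c² + y − 2)/(2(c − 1)(c − 2)((c − 1)² + 1)). -/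
/-- Non-exceptional rational solutions of equation (2.1). -/
def sol21 : Set (ℚ × ℚ) :=
  {p | p.1^2*p.2^4 - 5*p.1^2*p.2^3 + 10*p.1^2*p.2^2 - 10*p.1^2*p.2 + 4*p.1^2
        - p.1*p.2^3 + 2*p.1*p.2 + 2*p.2^2 = 0 ∧
       p ≠ (0, 0) ∧ p ≠ (-2, 1) ∧ p ≠ (2, 2)}

/-- Non-exceptional rational points of the elliptic curve (2.7). -/
def pts27 : Set (ℚ × ℚ) :=
  {q | q.1^2 = -7*q.2^4 + 40*q.2^3 - 84*q.2^2 + 80*q.2 - 28 ∧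
       q ≠ (1, 1) ∧ q ≠ (-1, 1) ∧ q ≠ (-2, 2) ∧ q ≠ (2, 2)}

/-- The map (b, c) ↦ (y, c) of formula (2.14). -/
def map214 (p : ℚ × ℚ) : ℚ × ℚ :=
  (((2*p.2^4 - 10*p.2^3 + 20*p.2^2 - 20*p.2 + 8)*p.1 - p.2^3 + 2*p.2) / p.2, p.2)

/-- The map (y, c) ↦ (b, c) of formula (2.12). -/
def map212 (q : ℚ × ℚ) : ℚ × ℚ :=
  (q.2*(q.2^2 + q.1 - 2) / (2*(q.2 - 1)*(q.2 - 2)*((q.2 - 1)^2 + 1)), q.2)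

lemma sol_c {p : ℚ × ℚ} (hp : p ∈ sol21) : p.2 ≠ 0 ∧ p.2 ≠ 1 ∧ p.2 ≠ 2 := by
  obtain ⟨heq, h0, h1, h2⟩ := hp
  refine ⟨?_, ?_, ?_⟩
  · intro hc
    rw [hc] at heq
    have hb : p.1 = 0 := by nlinarith [heq]
    exact h0 (Prod.ext hb hc)
  · intro hc
    rw [hc] at heq
    have hb : p.1 = -2 := by linear_combination heq
    exact h1 (Prod.ext hb hc)
  · intro hc
    rw [hc] at heq
    have hb : p.1 = 2 := by linear_combination (-1/4 : ℚ)*heq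
    exact h2 (Prod.ext hb hc)

lemma pts_c {q : ℚ × ℚ} (hq : q ∈ pts27) : q.2 ≠ 0 ∧ q.2 ≠ 1 ∧ q.2 ≠ 2 := by
  obtain ⟨heq, h1, h1', h2, h2'⟩ := hq
  refine ⟨?_, ?_, ?_⟩
  · intro hc
    rw [hc] at heq
    nlinarith [sq_nonneg q.1]
  · intro hc
    rw [hc] at heq
    have : (q.1 - 1) * (q.1 + 1) = 0 := by linear_combination heq
    rcases mul_eq_zero.mp this with h | h
    · exact h1 (Prod.ext (show q.1 = 1 by linarith) hc)
    · exact h1' (Prod.ext (show q.1 = -1 by linarith) hc)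
  · intro hc
    rw [hc] at heq
    have : (q.1 - 2) * (q.1 + 2) = 0 := by linear_combination heq
    rcases mul_eq_zero.mp this with h | h
    · exact h2' (Prod.ext (show q.1 = 2 by linarith) hc)
    · exact h2 (Prod.ext (show q.1 = -2 by linarith) hc)

lemma denom_ne {c : ℚ} (h1 : c ≠ 1) (h2 : c ≠ 2) :
    2*(c-1)*(c-2)*((c-1)^2+1) ≠ 0 := by
  have h3 : (c-1)^2 + 1 ≠ 0 := by positivity
  exact mul_ne_zero (mul_ne_zero (mul_ne_zero two_ne_zero (sub_ne_zero.mpr h1))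
    (sub_ne_zero.mpr h2)) h3

lemma mapsTo214 : Set.MapsTo map214 sol21 pts27 := by
  intro p hp
  obtain ⟨hc0, hc1, hc2⟩ := sol_c hp
  obtain ⟨heq, -, -, -⟩ := hp
  obtain ⟨b, c⟩ := p
  simp only at hc0 hc1 hc2 heq
  refine ⟨?_, ?_, ?_, ?_, ?_⟩
  · show (((2*c^4 - 10*c^3 + 20*c^2 - 20*c + 8)*b - c^3 + 2*c) / c)^2
      = -7*c^4 + 40*c^3 - 84*c^2 + 80*c - 28
    rw [div_pow, div_eq_iff (pow_ne_zero 2 hc0)]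
    linear_combination (4*c^4 - 20*c^3 + 40*c^2 - 40*c + 16) * heq
  · intro h; exact hc1 (by simpa [map214] using congrArg Prod.snd h)
  · intro h; exact hc1 (by simpa [map214] using congrArg Prod.snd h)
  · intro h; exact hc2 (by simpa [map214] using congrArg Prod.snd h)
  · intro h; exact hc2 (by simpa [map214] using congrArg Prod.snd h)

lemma mapsTo212 : Set.MapsTo map212 pts27 sol21 := by
  intro q hq
  obtain ⟨hc0, hc1, hc2⟩ := pts_c hq
  obtain ⟨heq, -, -, -, -⟩ := hq
  obtain ⟨y, c⟩ := q
  simp only at hc0 hc1 hc2 heq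
  have hA := denom_ne hc1 hc2
  refine ⟨?_, ?_, ?_, ?_⟩
  · simp only [map212]
    field_simp
    ring_nf
    ring_nf at heq
    linear_combination (4*c^2 - 10*c^3 + 10*c^4 - 5*c^5 + c^6) * heq
  · intro h; exact hc0 (by simpa [map212] using congrArg Prod.snd h)
  · intro h; exact hc1 (by simpa [map212] using congrArg Prod.snd h)
  · intro h; exact hc2 (by simpa [map212] using congrArg Prod.snd h)

lemma invOn : Set.InvOn map212 map214 sol21 pts27 := by
  constructor
  · intro p hp
    obtain ⟨hc0, hc1, hc2⟩ := sol_c hp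
    have hA := denom_ne hc1 hc2
    obtain ⟨b, c⟩ := p
    simp only at hc0 hc1 hc2 hA
    simp only [map214, map212]
    refine Prod.ext ?_ rfl
    simp only
    rw [div_eq_iff hA]
    field_simp
    ring
  · intro q hq
    obtain ⟨hc0, hc1, hc2⟩ := pts_c hq
    have hA := denom_ne hc1 hc2
    obtain ⟨y, c⟩ := q
    simp only at hc0 hc1 hc2 hA
    simp only [map214, map212]
    refine Prod.ext ?_ rfl
    simp only
    rw [div_eq_iff hc0]
    field_simp
    ring

theorem stmt_4 : Set.BijOn map214 sol21 pts27 ∧ Set.InvOn map212 map214 sol21 pts27 := by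
  exact ⟨invOn.bijOn mapsTo214 mapsTo212, invOn⟩
end

section
/- The map sending (b, c) to (y, c) with y = (4c² − 12c + 8)·b − c² + 2 is a bijection from the set of rational pairs (b, c) satisfying 2b²c⁴ − 12b²c³ + 26b²c² − 24b²c + 8b² − bc⁴ + 3bc³ − 6bc + 4b + c³ − 2c² + 2c = 0 other than (0,0) and (−1/2,0), onto the set of rational pairs (y, c) satisfying y² = c⁴ − 8c³ + 12c² − 16c + 4 other than (2,0) and (−2,0); its inverse sends (y, c) to (b, c) with b = (c² + y − 2)/(4(c − 2)(c − 1)). -/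
/-- Non-exceptional rational solutions of equation (2.2). -/
def sol22 : Set (ℚ × ℚ) :=
  {p | 2*p.1^2*p.2^4 - 12*p.1^2*p.2^3 + 26*p.1^2*p.2^2 - 24*p.1^2*p.2 + 8*p.1^2
        - p.1*p.2^4 + 3*p.1*p.2^3 - 6*p.1*p.2 + 4*p.1 + p.2^3 - 2*p.2^2 + 2*p.2 = 0 ∧
       p ≠ (0, 0) ∧ p ≠ (-1/2, 0)}

/-- Non-exceptional rational points of the elliptic curve (2.8). -/
def pts28 : Set (ℚ × ℚ) :=
  {q | q.1^2 = q.2^4 - 8*q.2^3 + 12*q.2^2 - 16*q.2 + 4 ∧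
       q ≠ (2, 0) ∧ q ≠ (-2, 0)}

/-- The map (b, c) ↦ (y, c) of formula (2.15). -/
def map215 (p : ℚ × ℚ) : ℚ × ℚ :=
  ((4*p.2^2 - 12*p.2 + 8)*p.1 - p.2^2 + 2, p.2)

/-- The map (y, c) ↦ (b, c) of formula (2.13). -/
def map213 (q : ℚ × ℚ) : ℚ × ℚ :=
  ((q.2^2 + q.1 - 2) / (4*(q.2 - 2)*(q.2 - 1)), q.2)

lemma sol_c0 {b c : ℚ} (h : (b, c) ∈ sol22) : c ≠ 0 := by
  obtain ⟨he, h0, h1⟩ := h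
  simp only at he
  rintro rfl
  have hb : b * (2*b + 1) = 0 := by linear_combination he / 4
  rcases mul_eq_zero.mp hb with hb | hb
  · exact h0 (by simp [hb])
  · exact h1 (by rw [Prod.ext_iff]; constructor <;> [linarith; rfl])

lemma sol_c1 {b c : ℚ} (h : (b, c) ∈ sol22) : c ≠ 1 := by
  obtain ⟨he, -, -⟩ := h
  simp only at he
  rintro rfl
  exact one_ne_zero (by linear_combination he)

lemma sol_c2 {b c : ℚ} (h : (b, c) ∈ sol22) : c ≠ 2 := by
  obtain ⟨he, -, -⟩ := h
  simp only at he
  rintro rfl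
  exact one_ne_zero (by linear_combination (1/4 : ℚ) * he)

lemma pts_c0 {y c : ℚ} (h : (y, c) ∈ pts28) : c ≠ 0 := by
  obtain ⟨he, h0, h1⟩ := h
  simp only at he
  rintro rfl
  have : (y - 2) * (y + 2) = 0 := by linear_combination he
  rcases mul_eq_zero.mp this with hy | hy
  · exact h0 (by rw [Prod.ext_iff]; constructor <;> [skip; rfl]; simpa using by linarith)
  · exact h1 (by rw [Prod.ext_iff]; constructor <;> [skip; rfl]; simpa using by linarith)

lemma pts_c1 {y c : ℚ} (h : (y, c) ∈ pts28) : c ≠ 1 := by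
  obtain ⟨he, -, -⟩ := h
  simp only at he
  rintro rfl
  nlinarith [sq_nonneg y]

lemma pts_c2 {y c : ℚ} (h : (y, c) ∈ pts28) : c ≠ 2 := by
  obtain ⟨he, -, -⟩ := h
  simp only at he
  rintro rfl
  nlinarith [sq_nonneg y]

theorem stmt_5 : Set.BijOn map215 sol22 pts28 ∧ Set.InvOn map213 map215 sol22 pts28 := by
  have hmt1 : Set.MapsTo map215 sol22 pts28 := by
    rintro ⟨b, c⟩ hp
    have hc0 := sol_c0 hp
    obtain ⟨he, -, -⟩ := hp
    simp only at he
    refine ⟨by simp only [map215]; linear_combination 8 * he, ?_, ?_⟩ <;>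
      · intro h
        exact hc0 (congrArg Prod.snd h)
  have hmt2 : Set.MapsTo map213 pts28 sol22 := by
    rintro ⟨y, c⟩ hq
    have hc0 := pts_c0 hq
    have hc1 := pts_c1 hq
    have hc2 := pts_c2 hq
    obtain ⟨he, -, -⟩ := hq
    simp only at he
    refine ⟨?_, ?_, ?_⟩
    · simp only [map213]
      have h1 : c - 1 ≠ 0 := sub_ne_zero.mpr hc1
      have h2 : c - 2 ≠ 0 := sub_ne_zero.mpr hc2
      set b := (c^2 + y - 2) / (4*(c - 2)*(c - 1)) with hbdef
      have hb : 4*(c-2)*(c-1)*b = c^2 + y - 2 := by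
        rw [hbdef]; field_simp
      linear_combination ((4*(c-1)*(c-2)*b - c^2 + 2 + y)/8) * hb + (1/8 : ℚ) * he
    · intro h
      exact hc0 (congrArg Prod.snd h)
    · intro h
      exact hc0 (congrArg Prod.snd h)
  have hinv : Set.InvOn map213 map215 sol22 pts28 := by
    constructor
    · rintro ⟨b, c⟩ hp
      have hc1 : c - 1 ≠ 0 := sub_ne_zero.mpr (sol_c1 hp)
      have hc2 : c - 2 ≠ 0 := sub_ne_zero.mpr (sol_c2 hp)
      simp only [map215, map213, Prod.mk.injEq]
      refine ⟨?_, trivial⟩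
      field_simp
      ring
    · rintro ⟨y, c⟩ hq
      have hc1 : c - 1 ≠ 0 := sub_ne_zero.mpr (pts_c1 hq)
      have hc2 : c - 2 ≠ 0 := sub_ne_zero.mpr (pts_c2 hq)
      simp only [map215, map213, Prod.mk.injEq]
      refine ⟨?_, trivial⟩
      field_simp
      ring
  exact ⟨hinv.bijOn hmt1 hmt2, hinv⟩
end

section
/- Let y, c be rational numbers with y² = −7c⁴ + 40c³ − 84c² + 80c − 28, c ≠ 1, c ≠ 2, and set b = c(c² + y − 2)/(2(c − 1)(c − 2)((c − 1)² + 1)). Assume the nondegeneracy condition (b²c⁴ − 6b²c³ + 13b²c² − 12b²c + 4b² + c²)·(bc − 1 − b)·(bc − c − 2b)·(b²c² + 2b² − 3b²c + c − bc² + 2b) ≠ 0. Then x = −1 is a root of the cubic x³ − E₁₀x² + E₂₀x − E₃₀ = 0, i.e. −1 − E₁₀ − E₂₀ − E₃₀ = 0, where E₁₀, E₂₀, E₃₀ are given by the formulas in the context. In particular this cubic polynomial is divisible by (x + 1) over ℚ. -/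
theorem stmt_7 (y c b E10 E20 E30 : ℚ)
    (hy : y^2 = -7*c^4 + 40*c^3 - 84*c^2 + 80*c - 28)
    (hc1 : c ≠ 1) (hc2 : c ≠ 2)
    (hb : b = c*(c^2 + y - 2) / (2*(c - 1)*(c - 2)*((c - 1)^2 + 1)))
    (hnd : (b^2*c^4 - 6*b^2*c^3 + 13*b^2*c^2 - 12*b^2*c + 4*b^2 + c^2)
           * (b*c - 1 - b) * (b*c - c - 2*b)
           * (b^2*c^2 + 2*b^2 - 3*b^2*c + c - b*c^2 + 2*b) ≠ 0)
    (hE10 : E10 = -(b^2*c^2 + 2*b^2 - 3*b^2*c - c)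
                   / (b^2*c^2 + 2*b^2 - 3*b^2*c + c - b*c^2 + 2*b))
    (hE20 : E20 = (b/2) * (b*c^2 - 2*c - 2*b) * (2*b*c^2 - c^2 - 6*b*c + 2 + 4*b)
                   * ((b*c - 1 - b)^2)⁻¹ * ((b*c - c - 2*b)^2)⁻¹)
    (hE30 : E30 = c * b^2 * (1 - c) * (c - 2) * (b*c^2 - 4*b*c + 2 + 4*b)
                   * (2*b*c^2 - c^2 - 4*b*c + 2*b)
                   * (b^2*c^4 - 6*b^2*c^3 + 13*b^2*c^2 - 12*b^2*c + 4*b^2 + c^2)⁻¹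
                   * ((b*c - 1 - b)^2)⁻¹ * ((b*c - c - 2*b)^2)⁻¹) :
    (-1 : ℚ) - E10 - E20 - E30 = 0 := by
  have hc1' : c - 1 ≠ 0 := sub_ne_zero.mpr hc1
  have hc2' : c - 2 ≠ 0 := sub_ne_zero.mpr hc2
  have hq : ((c-1)^2 + 1 : ℚ) ≠ 0 := by positivity
  obtain ⟨h1, hA⟩ := mul_ne_zero_iff.mp hnd
  obtain ⟨h2, hQ⟩ := mul_ne_zero_iff.mp h1
  obtain ⟨hN, hP⟩ := mul_ne_zero_iff.mp h2
  have hP2 : ((b*c - 1 - b)^2 : ℚ) ≠ 0 := pow_ne_zero _ hP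
  have hQ2 : ((b*c - c - 2*b)^2 : ℚ) ≠ 0 := pow_ne_zero _ hQ
  have hbD : b * (2*(c - 1)*(c - 2)*((c - 1)^2 + 1)) = c*(c^2 + y - 2) := by
    rw [hb]; field_simp
  have hR : (b*(2*(c - 1)*(c - 2)*((c - 1)^2 + 1)) - c^3 + 2*c)^2
      - c^2*(-7*c^4 + 40*c^3 - 84*c^2 + 80*c - 28) = 0 := by
    linear_combination (b*(2*(c - 1)*(c - 2)*((c - 1)^2 + 1)) - c^3 + 2*c + c*y) * hbD
      + c^2 * hy
  set A := (b^2*c^2 + 2*b^2 - 3*b^2*c + c - b*c^2 + 2*b : ℚ) with hAdef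
  set N := (b^2*c^4 - 6*b^2*c^3 + 13*b^2*c^2 - 12*b^2*c + 4*b^2 + c^2 : ℚ) with hNdef
  have key : (c-1)*(c-2)*((c-1)^2+1) *
      ((-2)*A*N*(b*c - 1 - b)^2*(b*c - c - 2*b)^2
        - 2*(-(b^2*c^2 + 2*b^2 - 3*b^2*c - c))*N*(b*c - 1 - b)^2*(b*c - c - 2*b)^2
        - (b*(b*c^2 - 2*c - 2*b)*(2*b*c^2 - c^2 - 6*b*c + 2 + 4*b))*A*N
        - 2*(c*b^2*(1 - c)*(c - 2)*(b*c^2 - 4*b*c + 2 + 4*b)*(2*b*c^2 - c^2 - 4*b*c + 2*b))*A) = 0 := by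
    rw [hAdef, hNdef]
    linear_combination ((-1/2)*c^3 + (-3/2)*b*c^2 + (3/4)*b*c^4 - 2*b^2*c + (3/2)*b^2*c^2
      + (3/4)*b^2*c^4 + (-1/2)*b^2*c^5 - 2*b^3 + 4*b^3*c + (-5/2)*b^3*c^2 + (5/4)*b^3*c^4
      - b^3*c^5 + (1/4)*b^3*c^6 - 2*b^4 + 8*b^4*c + (-27/2)*b^4*c^2 + (25/2)*b^4*c^3
      + (-27/4)*b^4*c^4 + 2*b^4*c^5 + (-1/4)*b^4*c^6) * hR
  have hfinal : (-1 : ℚ) - E10 - E20 - E30 =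
      ((c-1)*(c-2)*((c-1)^2+1) *
      ((-2)*A*N*(b*c - 1 - b)^2*(b*c - c - 2*b)^2
        - 2*(-(b^2*c^2 + 2*b^2 - 3*b^2*c - c))*N*(b*c - 1 - b)^2*(b*c - c - 2*b)^2
        - (b*(b*c^2 - 2*c - 2*b)*(2*b*c^2 - c^2 - 6*b*c + 2 + 4*b))*A*N
        - 2*(c*b^2*(1 - c)*(c - 2)*(b*c^2 - 4*b*c + 2 + 4*b)*(2*b*c^2 - c^2 - 4*b*c + 2*b))*A))
      / (2*(c-1)*(c-2)*((c-1)^2+1)*A*N*(b*c - 1 - b)^2*(b*c - c - 2*b)^2) := by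
    rw [hE10, hE20, hE30]
    generalize b*c - 1 - b = P at hP ⊢
    generalize b*c - c - 2*b = Q at hQ ⊢
    field_simp
  rw [hfinal, key, zero_div]
end

section
/- Let y, c be rational numbers with y² = −7c⁴ + 40c³ − 84c² + 80c − 28, c ≠ 1, c ≠ 2, and set b = c(c² + y − 2)/(2(c − 1)(c − 2)((c − 1)² + 1)). Assume (b²c⁴ − 6b²c³ + 13b²c² − 12b²c + 4b² + c²)·(bc − 1 − b)·(bc − c − 2b) ≠ 0. Then E₀₃ = 0, where E₀₃ is given by the formula in the context; in particular d = 0 is a root of the cubic d³ − E₀₁d² + E₀₂d − E₀₃. -/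
theorem stmt_8 (y c b E03 : ℚ)
    (hy : y^2 = -7*c^4 + 40*c^3 - 84*c^2 + 80*c - 28)
    (hc1 : c ≠ 1) (hc2 : c ≠ 2)
    (hb : b = c*(c^2 + y - 2) / (2*(c - 1)*(c - 2)*((c - 1)^2 + 1)))
    (hnd : (b^2*c^4 - 6*b^2*c^3 + 13*b^2*c^2 - 12*b^2*c + 4*b^2 + c^2)
           * (b*c - 1 - b) * (b*c - c - 2*b) ≠ 0)
    (hE03 : E03 = (b/2)
        * (b^2*c^4 - 5*b^2*c^3 + 10*b^2*c^2 - 10*b^2*c + 4*b^2 + 2*b*c + 2*c^2 - b*c^3)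
        * (2*b^2*c^4 - 12*b^2*c^3 + 26*b^2*c^2 - 24*b^2*c + 8*b^2 - b*c^4 + 3*b*c^3
            - 6*b*c + 4*b + c^3 - 2*c^2 + 2*c)
        * (b^2*c^4 - 6*b^2*c^3 + 13*b^2*c^2 - 12*b^2*c + 4*b^2 + c^2)⁻¹
        * ((b*c - 1 - b)^2)⁻¹ * ((b*c - c - 2*b)^2)⁻¹) :
    E03 = 0 := by
  have hD : (2*(c - 1)*(c - 2)*((c - 1)^2 + 1)) ≠ 0 := by
    have h1 : c - 1 ≠ 0 := sub_ne_zero.mpr hc1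
    have h2 : c - 2 ≠ 0 := sub_ne_zero.mpr hc2
    have h3 : ((c - 1)^2 + 1 : ℚ) ≠ 0 := by positivity
    exact mul_ne_zero (mul_ne_zero (mul_ne_zero two_ne_zero h1) h2) h3
  have hbD : b * (2*(c - 1)*(c - 2)*((c - 1)^2 + 1)) = c*(c^2 + y - 2) := by
    rw [hb]; field_simp
  have hf1 : (b^2*c^4 - 5*b^2*c^3 + 10*b^2*c^2 - 10*b^2*c + 4*b^2 + 2*b*c + 2*c^2 - b*c^3)
      * (2*(c - 1)*(c - 2)*((c - 1)^2 + 1))^2 = 0 := by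
    linear_combination ((c^4 - 5*c^3 + 10*c^2 - 10*c + 4) *
        (b * (2*(c - 1)*(c - 2)*((c - 1)^2 + 1)) + c*(c^2 + y - 2))
        + (2*c - c^3) * (2*(c - 1)*(c - 2)*((c - 1)^2 + 1))) * hbD
      + c^2*(c^4 - 5*c^3 + 10*c^2 - 10*c + 4) * hy
  have hf : b^2*c^4 - 5*b^2*c^3 + 10*b^2*c^2 - 10*b^2*c + 4*b^2 + 2*b*c + 2*c^2 - b*c^3 = 0 := by
    rcases mul_eq_zero.mp hf1 with h | h
    · exact h
    · exact absurd (pow_eq_zero_iff (n := 2) (by norm_num) |>.mp h) hD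
  rw [hE03, hf]
  ring
end

section
/- Let y, c be rational numbers with y² = c⁴ − 8c³ + 12c² − 16c + 4, c ≠ 1, c ≠ 2, and set b = (c² + y − 2)/(4(c − 2)(c − 1)). Assume the nondegeneracy condition (b²c⁴ − 6b²c³ + 13b²c² − 12b²c + 4b² + c²)·(bc − 1 − b)·(bc − c − 2b)·(b²c² + 2b² − 3b²c + c − bc² + 2b) ≠ 0. Then x = 1 is a root of the cubic x³ − E₁₀x² + E₂₀x − E₃₀ = 0, i.e. 1 − E₁₀ + E₂₀ − E₃₀ = 0, where E₁₀, E₂₀, E₃₀ are given by the formulas in the context. In particular this cubic polynomial is divisible by (x − 1) over ℚ. -/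
theorem stmt_9 (y c b E10 E20 E30 : ℚ)
    (hy : y^2 = c^4 - 8*c^3 + 12*c^2 - 16*c + 4)
    (hc1 : c ≠ 1) (hc2 : c ≠ 2)
    (hb : b = (c^2 + y - 2) / (4*(c - 2)*(c - 1)))
    (hnd : (b^2*c^4 - 6*b^2*c^3 + 13*b^2*c^2 - 12*b^2*c + 4*b^2 + c^2)
           * (b*c - 1 - b) * (b*c - c - 2*b)
           * (b^2*c^2 + 2*b^2 - 3*b^2*c + c - b*c^2 + 2*b) ≠ 0)
    (hE10 : E10 = -(b^2*c^2 + 2*b^2 - 3*b^2*c - c)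
                   / (b^2*c^2 + 2*b^2 - 3*b^2*c + c - b*c^2 + 2*b))
    (hE20 : E20 = (b/2) * (b*c^2 - 2*c - 2*b) * (2*b*c^2 - c^2 - 6*b*c + 2 + 4*b)
                   * ((b*c - 1 - b)^2)⁻¹ * ((b*c - c - 2*b)^2)⁻¹)
    (hE30 : E30 = c * b^2 * (1 - c) * (c - 2) * (b*c^2 - 4*b*c + 2 + 4*b)
                   * (2*b*c^2 - c^2 - 4*b*c + 2*b)
                   * (b^2*c^4 - 6*b^2*c^3 + 13*b^2*c^2 - 12*b^2*c + 4*b^2 + c^2)⁻¹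
                   * ((b*c - 1 - b)^2)⁻¹ * ((b*c - c - 2*b)^2)⁻¹) :
    (1 : ℚ) - E10 + E20 - E30 = 0 := by
  have hQ : (b^2*c^4 - 6*b^2*c^3 + 13*b^2*c^2 - 12*b^2*c + 4*b^2 + c^2) ≠ 0 := by
    intro h; apply hnd; rw [h]; ring
  have hP1 : (b*c - 1 - b) ≠ 0 := by intro h; apply hnd; rw [h]; ring
  have hP2 : (b*c - c - 2*b) ≠ 0 := by intro h; apply hnd; rw [h]; ring
  have hD1 : (b^2*c^2 + 2*b^2 - 3*b^2*c + c - b*c^2 + 2*b) ≠ 0 := by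
    intro h; apply hnd; rw [h]; ring
  have h1 : c - 1 ≠ 0 := sub_ne_zero.mpr hc1
  have h2 : c - 2 ≠ 0 := sub_ne_zero.mpr hc2
  have hd : (4*(c - 2)*(c - 1)) ≠ 0 := by positivity
  rw [eq_div_iff hd] at hb
  have hR : 2*(c-1)^2*(c-2)^2*b^2 - (c-1)*(c-2)*(c^2-2)*b + c*(c^2-2*c+2) = 0 := by
    linear_combination (1/8)*hy + ((y + 4*(c-2)*(c-1)*b - c^2 + 2)/8)*hb
  rw [hE10, hE20, hE30]
  have hP2' : c*(b-1)-b*2 ≠ 0 := by intro h; apply hP2; linear_combination h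
  have hD1' : b^2*(c^2+2-c*3)+c-b*c^2+b*2 ≠ 0 := by intro h; apply hD1; linear_combination h
  have hQ' : b^2*(c*(c*(c*(c-6)+13)-12)+4)+c^2 ≠ 0 := by intro h; apply hQ; linear_combination h
  field_simp
  linear_combination (((2:ℚ))*b^2*c^2 + ((-2:ℚ))*b^2*c^3 + ((1:ℚ))*b^2*c^4 + ((8:ℚ))*b^3*c^1 + ((-10:ℚ))*b^3*c^2 + ((5:ℚ))*b^3*c^4 + ((-2:ℚ))*b^3*c^5 + ((8:ℚ))*b^4 + ((-38:ℚ))*b^4*c^2 + ((48:ℚ))*b^4*c^3 + ((-19:ℚ))*b^4*c^4 + ((1:ℚ))*b^4*c^6 + ((24:ℚ))*b^5 + ((-72:ℚ))*b^5*c^1 + ((66:ℚ))*b^5*c^2 + ((-33:ℚ))*b^5*c^4 + ((18:ℚ))*b^5*c^5 + ((-3:ℚ))*b^5*c^6 + ((16:ℚ))*b^6 + ((-72:ℚ))*b^6*c^1 + ((132:ℚ))*b^6*c^2 + ((-126:ℚ))*b^6*c^3 + ((66:ℚ))*b^6*c^4 + ((-18:ℚ))*b^6*c^5 + ((2:ℚ))*b^6*c^6)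 * hR
end

section
/- Let y, c be rational numbers with y² = c⁴ − 8c³ + 12c² − 16c + 4, c ≠ 1, c ≠ 2, and set b = (c² + y − 2)/(4(c − 2)(c − 1)). Assume (b²c⁴ − 6b²c³ + 13b²c² − 12b²c + 4b² + c²)·(bc − 1 − b)·(bc − c − 2b) ≠ 0. Then E₀₃ = 0, where E₀₃ is given by the formula in the context; in particular d = 0 is a root of the cubic d³ − E₀₁d² + E₀₂d − E₀₃. -/
theorem stmt_10 (y c b E03 : ℚ)
    (hy : y^2 = c^4 - 8*c^3 + 12*c^2 - 16*c + 4)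
    (hc1 : c ≠ 1) (hc2 : c ≠ 2)
    (hb : b = (c^2 + y - 2) / (4*(c - 2)*(c - 1)))
    (hnd : (b^2*c^4 - 6*b^2*c^3 + 13*b^2*c^2 - 12*b^2*c + 4*b^2 + c^2)
           * (b*c - 1 - b) * (b*c - c - 2*b) ≠ 0)
    (hE03 : E03 = (b/2)
        * (b^2*c^4 - 5*b^2*c^3 + 10*b^2*c^2 - 10*b^2*c + 4*b^2 + 2*b*c + 2*c^2 - b*c^3)
        * (2*b^2*c^4 - 12*b^2*c^3 + 26*b^2*c^2 - 24*b^2*c + 8*b^2 - b*c^4 + 3*b*c^3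
            - 6*b*c + 4*b + c^3 - 2*c^2 + 2*c)
        * (b^2*c^4 - 6*b^2*c^3 + 13*b^2*c^2 - 12*b^2*c + 4*b^2 + c^2)⁻¹
        * ((b*c - 1 - b)^2)⁻¹ * ((b*c - c - 2*b)^2)⁻¹) :
    E03 = 0 := by
  have h1 : c - 1 ≠ 0 := sub_ne_zero.mpr hc1
  have h2 : c - 2 ≠ 0 := sub_ne_zero.mpr hc2
  have hD : (4*(c - 2)*(c - 1)) ≠ 0 := by
    intro h
    rcases mul_eq_zero.mp h with h' | h'
    · rcases mul_eq_zero.mp h' with h'' | h''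
      · norm_num at h''
      · exact h2 h''
    · exact h1 h'
  have hb' : b * (4*(c - 2)*(c - 1)) = c^2 + y - 2 := by
    rw [hb, div_mul_cancel₀ _ hD]
  have key : (2*b^2*c^4 - 12*b^2*c^3 + 26*b^2*c^2 - 24*b^2*c + 8*b^2 - b*c^4 + 3*b*c^3
      - 6*b*c + 4*b + c^3 - 2*c^2 + 2*c) * (4*(c - 2)*(c - 1))^2 = 0 := by
    linear_combination
      (2*(c^4 - 6*c^3 + 13*c^2 - 12*c + 4)*(b*(4*(c - 2)*(c - 1)) + (c^2 + y - 2))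
        - (4*(c - 2)*(c - 1))*(c^4 - 3*c^3 + 6*c - 4)) * hb'
      + (2*c^4 - 12*c^3 + 26*c^2 - 24*c + 8) * hy
  have hF2 : (2*b^2*c^4 - 12*b^2*c^3 + 26*b^2*c^2 - 24*b^2*c + 8*b^2 - b*c^4 + 3*b*c^3
      - 6*b*c + 4*b + c^3 - 2*c^2 + 2*c) = 0 := by
    rcases mul_eq_zero.mp key with h | h
    · exact h
    · exact absurd h (pow_ne_zero _ hD)
  rw [hE03, hF2]
  ring
end

section
/- Let b, c be rational numbers with D = b²c² + 2b² − 3b²c + c − bc² + 2b ≠ 0, and define E₁₁ = −b(c² + 2 − 4c)/D, E₀₁ = −b(c² + 2 − 2c)/D, and E₁₀ = −(b²c² + 2b² − 3b²c − c)/D. Then (2E₁₁)² + (E₀₁² + 1 − E₁₀²)² − 8E₀₁² = 0. -/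
theorem stmt_15 (b c D E11 E01 E10 : ℚ)
    (hD : D = b^2*c^2 + 2*b^2 - 3*b^2*c + c - b*c^2 + 2*b) (hD0 : D ≠ 0)
    (hE11 : E11 = -(b*(c^2 + 2 - 4*c)) / D)
    (hE01 : E01 = -(b*(c^2 + 2 - 2*c)) / D)
    (hE10 : E10 = -(b^2*c^2 + 2*b^2 - 3*b^2*c - c) / D) :
    (2*E11)^2 + (E01^2 + 1 - E10^2)^2 - 8*E01^2 = 0 := by
  subst hE11 hE01 hE10
  field_simp
  subst hD
  ring
end
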